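/- For every n ≥ 1 and every two vertices u, v of D_n, there is at most one directed path from u to v in D_n. -/

import Mathlib

/-- Vertex set of the digraph `D (n+1)` from the paper (`Vtx n` = vertices of `D_{n+1}`). -/
def Vtx : ℕ → Type
  | 0 => Unit
  | (n+1) => (Fin (n+1) × Vtx n) ⊕ ((i : Fin (n+1)) → Vtx n)

/-- Edge relation of `D_{n+1}`. -/
def DEdge : (n : ℕ) → Vtx n → Vtx n → Prop
  | 0, _, _ => False
  | (n+1), Sum.inl (i, x), Sum.inl (j, y) => i = j ∧ DEdge n x y
  | (n+1), Sum.inl (i, x), Sum.inr T => T i = x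
  | (_+1), Sum.inr _, _ => False

/-- There is a directed walk of length `k` from `u` to `v`. -/
def WalkLen {V : Type*} (E : V → V → Prop) (u v : V) (k : ℕ) : Prop :=
  ∃ f : Fin (k+1) → V, f 0 = u ∧ f (Fin.last k) = v ∧
    ∀ i : Fin k, E (f i.castSucc) (f i.succ)

/-- `l` is a directed path (as a list of distinct vertices) from `u` to `v`. -/
def IsDPath {V : Type*} (E : V → V → Prop) (u v : V) (l : List V) : Prop :=
  l.Chain' E ∧ l.Nodup ∧ l.head? = some u ∧ l.getLast? = some v

/-- Positive edges of `D'`. -/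
def PosE {V : Type*} (E : V → V → Prop) (u v : V) : Prop :=
  ∃ k, k % 3 = 1 ∧ WalkLen E u v k

/-- Negative edges of `D'`. -/
def NegE {V : Type*} (E : V → V → Prop) (u v : V) : Prop :=
  ∃ k, k % 3 = 2 ∧ WalkLen E v u k

/-- Edge relation of `D_{n+1}'`. -/
def DEdge' (n : ℕ) (u v : Vtx n) : Prop :=
  PosE (DEdge n) u v ∨ NegE (DEdge n) u v

/-- Underlying undirected graph of a digraph. -/
def underSG {V : Type*} (E : V → V → Prop) : SimpleGraph V :=
  SimpleGraph.fromRel E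

/-- `G_{n+1}`, the underlying undirected graph of `D_{n+1}'`. -/
def Gn (n : ℕ) : SimpleGraph (Vtx n) := underSG (DEdge' n)

/-- A digraph is acyclic iff no vertex lies on a directed cycle. -/
def DAcyclic {V : Type*} (E : V → V → Prop) : Prop :=
  ∀ v : V, ¬ Relation.TransGen E v v

/-- `k`-dicolorability. -/
def Dicolorable {V : Type*} (E : V → V → Prop) (k : ℕ) : Prop :=
  ∃ f : V → Fin k, ∀ c : Fin k,
    DAcyclic (fun a b => E a b ∧ f a = c ∧ f b = c)

/-- `D` has an induced directed cycle of odd length at least 5. -/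
def HasInducedOddCycle {V : Type*} (E : V → V → Prop) : Prop :=
  ∃ m : ℕ, 5 ≤ m ∧ Odd m ∧ ∃ f : ZMod m → V, Function.Injective f ∧
    (∀ i, E (f i) (f (i+1))) ∧ (∀ i j, E (f i) (f j) → j = i + 1)
lemma dedge_to_inl {n : ℕ} {a : Vtx (n+1)} {j : Fin (n+1)} {y : Vtx n}
    (h : DEdge (n+1) a (Sum.inl (j, y))) : ∃ x, a = Sum.inl (j, x) ∧ DEdge n x y := by
  match a with
  | Sum.inl (i, x) =>
    obtain ⟨rfl, he⟩ := h
    exact ⟨x, rfl, he⟩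
  | Sum.inr T => exact h.elim

lemma dedge_to_inr {n : ℕ} {a : Vtx (n+1)} {T : (i : Fin (n+1)) → Vtx n}
    (h : DEdge (n+1) a (Sum.inr T)) : ∃ i, a = Sum.inl (i, T i) := by
  match a with
  | Sum.inl (i, x) => exact ⟨i, by rw [h]⟩
  | Sum.inr T' => exact h.elim

lemma chain_classify (n : ℕ) : ∀ (l : List (Vtx (n+1))), l.Chain' (DEdge (n+1)) →
    (∃ (j : Fin (n+1)) (m : List (Vtx n)), m.Chain' (DEdge n) ∧
      l = m.map (fun x => @id (Vtx (n+1)) (Sum.inl (j, x)))) ∨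
    (∃ (T : (i : Fin (n+1)) → Vtx n) (j : Fin (n+1)) (m : List (Vtx n)),
      m.Chain' (DEdge n) ∧ (m ≠ [] → m.getLast? = some (T j)) ∧
      l = m.map (fun x => @id (Vtx (n+1)) (Sum.inl (j, x))) ++ [@id (Vtx (n+1)) (Sum.inr T)]) := by
  intro l
  induction l with
  | nil => intro _; exact Or.inl ⟨0, [], List.isChain_nil, rfl⟩
  | cons a t ih =>
    intro h
    obtain ⟨hhead, htail⟩ := List.isChain_cons.mp h
    rcases ih htail with ⟨j, m, hm, rfl⟩ | ⟨T, j, m, hm, hlast, rfl⟩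
    · match m with
      | [] =>
        match a with
        | Sum.inl (i, x) => exact Or.inl ⟨i, [x], List.isChain_singleton x, rfl⟩
        | Sum.inr T => exact Or.inr ⟨T, 0, [], List.isChain_nil, fun h => absurd rfl h, rfl⟩
      | y :: m' =>
        have he : DEdge (n+1) a (Sum.inl (j, y)) := hhead _ rfl
        obtain ⟨x, rfl, hxy⟩ := dedge_to_inl he
        exact Or.inl ⟨j, x :: y :: m', List.isChain_cons_cons.mpr ⟨hxy, hm⟩, rfl⟩
    · match m with
      | [] =>
        have he : DEdge (n+1) a (Sum.inr T) := hhead _ rfl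
        obtain ⟨i, rfl⟩ := dedge_to_inr he
        exact Or.inr ⟨T, i, [T i], List.isChain_singleton _, fun _ => rfl, rfl⟩
      | y :: m' =>
        have he : DEdge (n+1) a (Sum.inl (j, y)) := hhead _ rfl
        obtain ⟨x, rfl, hxy⟩ := dedge_to_inl he
        refine Or.inr ⟨T, j, x :: y :: m', List.isChain_cons_cons.mpr ⟨hxy, hm⟩, ?_, rfl⟩
        intro _
        simpa using hlast (by simp)

lemma unique_chain : ∀ (n : ℕ) (u v : Vtx n) (l₁ l₂ : List (Vtx n)),
    l₁.Chain' (DEdge n) → l₂.Chain' (DEdge n) →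
    l₁.head? = some u → l₂.head? = some u →
    l₁.getLast? = some v → l₂.getLast? = some v → l₁ = l₂ := by
  intro n
  induction n with
  | zero =>
    intro u v l₁ l₂ h₁ h₂ hu₁ hu₂ _ _
    have key : ∀ l : List (Vtx 0), l.Chain' (DEdge 0) → l.head? = some u → l = [u] := by
      intro l hl hh
      match l with
      | [] => simp at hh
      | [a] => simpa using hh
      | a :: b :: t => exact ((List.isChain_cons_cons.mp hl).1).elim
    rw [key l₁ h₁ hu₁, key l₂ h₂ hu₂]
  | succ n ih =>
    intro u v l₁ l₂ h₁ h₂ hu₁ hu₂ hv₁ hv₂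
    rcases chain_classify n l₁ h₁ with ⟨j₁, m₁, hm₁, rfl⟩ | ⟨T₁, j₁, m₁, hm₁, hl₁, rfl⟩ <;>
      rcases chain_classify n l₂ h₂ with ⟨j₂, m₂, hm₂, rfl⟩ | ⟨T₂, j₂, m₂, hm₂, hl₂, rfl⟩
    · -- both inl
      rw [List.head?_map, Option.map_eq_some_iff] at hu₁ hu₂
      rw [List.getLast?_map, Option.map_eq_some_iff] at hv₁ hv₂
      obtain ⟨x₁, hx₁, hux₁⟩ := hu₁
      obtain ⟨x₂, hx₂, hux₂⟩ := hu₂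
      obtain ⟨y₁, hy₁, hvy₁⟩ := hv₁
      obtain ⟨y₂, hy₂, hvy₂⟩ := hv₂
      rw [← hux₂] at hux₁
      injection hux₁ with hp
      injection hp with hj hx
      subst hj
      rw [← hvy₂] at hvy₁
      injection hvy₁ with hp'
      injection hp' with _ hy
      subst hx; subst hy
      rw [ih _ _ m₁ m₂ hm₁ hm₂ hx₁ hx₂ hy₁ hy₂]
    · -- l₁ inl, l₂ ends inr : contradiction via v
      rw [List.getLast?_map, Option.map_eq_some_iff] at hv₁
      obtain ⟨y₁, _, hvy₁⟩ := hv₁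
      rw [List.getLast?_concat] at hv₂
      rw [← hvy₁] at hv₂
      cases hv₂
    · rw [List.getLast?_map, Option.map_eq_some_iff] at hv₂
      obtain ⟨y₂, _, hvy₂⟩ := hv₂
      rw [List.getLast?_concat] at hv₁
      rw [← hvy₂] at hv₁
      cases hv₁
    · -- both end inr
      rw [List.getLast?_concat] at hv₁ hv₂
      rw [← hv₂] at hv₁
      injection hv₁ with hT
      injection hT with hT'
      subst hT' 
      match m₁, m₂ with
      | [], [] => rfl
      | [], y₂ :: m₂' =>
        simp only [List.map_nil, List.nil_append, List.head?] at hu₁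
        simp only [List.map_cons, List.cons_append, List.head?] at hu₂
        rw [← hu₂] at hu₁; cases hu₁
      | y₁ :: m₁', [] =>
        simp only [List.map_nil, List.nil_append, List.head?] at hu₂
        simp only [List.map_cons, List.cons_append, List.head?] at hu₁
        rw [← hu₂] at hu₁; cases hu₁
      | y₁ :: m₁', y₂ :: m₂' =>
        simp only [List.map_cons, List.cons_append, List.head?] at hu₁ hu₂
        rw [← hu₂] at hu₁
        injection hu₁ with hs
        injection hs with hp
        injection hp with hj hy
        subst hj; subst hy
        have e₁ := hl₁ (by simp)
        have e₂ := hl₂ (by simp)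
        rw [ih _ _ _ _ hm₁ hm₂ rfl rfl e₁ e₂]

/-- at most one directed path between any two vertices of `D_n`. -/
theorem Dn_unique_path (n : ℕ) (u v : Vtx n) (l₁ l₂ : List (Vtx n))
    (h₁ : IsDPath (DEdge n) u v l₁) (h₂ : IsDPath (DEdge n) u v l₂) :
    l₁ = l₂ := by
  obtain ⟨c₁, -, hh₁, hl₁⟩ := h₁
  obtain ⟨c₂, -, hh₂, hl₂⟩ := h₂
  exact unique_chain n u v l₁ l₂ c₁ c₂ hh₁ hh₂ hl₁ hl₂
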